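/- Let f ∈ K((x^{1/q})) with ord_x(f) = -p/q define an irreducible E_{f,q}, let g(x^{1/q}) = f(ζ_q^i x^{1/q}) - f(x^{1/q}) for 1 ≤ i ≤ q-1, and let (q,p;β₁,…,β_g) be the dual Puiseux characteristic with gcd sequence e₀=q, e_k = gcd(e_{k-1},β_k). Then ord_x(f - f_i) = -β_j/q if and only if q/e_{j-1} divides i but q/e_j does not divide i; moreover, for each j the number of indices i ∈ {1,…,q-1} with ord_x(f - f_i) = -β_j/q equals e_{j-1} - e_j. -/

import Mathlib

/-- The conjugate `F(c·t)` of a formal Laurent series `F(t)`: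
the `n`-th coefficient is multiplied by `c^n` (with `zpow` in the field `K`). -/
noncomputable def LaurentSeries.conjRoot {K : Type*} [Field K] (c : K) (F : LaurentSeries K) :
    LaurentSeries K where
  coeff n := c ^ n * F.coeff n
  isPWO_support' := F.isPWO_support.mono (fun n hn => by
    simp only [Function.mem_support] at hn ⊢
    exact fun h => hn (by simp [h]))

/-- The ring homomorphism `K[[x]] → K((t))` sending `x` to `t^N` (for `N > 0`). -/
noncomputable def xpowHom (K : Type*) [Field K] (N : ℕ) (hN : 0 < N) :
    PowerSeries K →+* LaurentSeries K :=
  (HahnSeries.embDomainRingHom (AddMonoidHom.mk' (fun n : ℤ => (N : ℤ) * n) (by intro a b; ring))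
    (fun a b h => mul_left_cancel₀ (show (N : ℤ) ≠ 0 by exact_mod_cast hN.ne') h)
    (fun g g' => mul_le_mul_iff_of_pos_left (show (0 : ℤ) < (N : ℤ) by exact_mod_cast hN))).comp
    (HahnSeries.ofPowerSeries ℤ K)

/-- `DualChar q supp g β e` : the Laurent series (in `t = x^{1/q}`) with support `supp ⊆ ℤ`
has dual Puiseux characteristic `(q, -; β 1, …, β g)` with gcd sequence `e 0 = q, …, e g = 1`:
for each `k < g`, `-β (k+1)` is the least exponent in the support not divisible by `e k`,
and `e (k+1) = gcd (e k) (β (k+1))`. -/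
def DualChar (q : ℕ) (supp : ℤ → Prop) (g : ℕ) (β : ℕ → ℕ) (e : ℕ → ℕ) : Prop :=
  e 0 = q ∧ e g = 1 ∧ ∀ k < g,
    supp (-(β (k + 1) : ℤ)) ∧ ¬ ((e k : ℤ) ∣ (β (k + 1) : ℤ)) ∧
    (∀ i : ℤ, supp i → ¬ ((e k : ℤ) ∣ i) → -(β (k + 1) : ℤ) ≤ i) ∧
    e (k + 1) = Nat.gcd (e k) (β (k + 1))

/-- `PCharZ m supp g β e` : the Puiseux characteristic `(m; β 1, …, β g)` of a
parametrization `x = t^m`, `y = ∑ c_i t^i` with support `supp ⊆ ℤ`: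
for each `k < g`, `β (k+1)` is the least exponent in the support not divisible by
`e k`, with gcd sequence `e 0 = m`, `e (k+1) = gcd (e k) (β (k+1))`, `e g = 1`. -/
def PCharZ (m : ℕ) (supp : ℤ → Prop) (g : ℕ) (β : ℕ → ℕ) (e : ℕ → ℕ) : Prop :=
  e 0 = m ∧ e g = 1 ∧ ∀ k < g,
    supp (β (k + 1) : ℤ) ∧ ¬ ((e k : ℤ) ∣ (β (k + 1) : ℤ)) ∧
    (∀ i : ℤ, supp i → ¬ ((e k : ℤ) ∣ i) → (β (k + 1) : ℤ) ≤ i) ∧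
    e (k + 1) = Nat.gcd (e k) (β (k + 1))

/-- `PCharN` : as `PCharZ`, for supports indexed by `ℕ` (power series parametrizations). -/
def PCharN (m : ℕ) (supp : ℕ → Prop) (g : ℕ) (β : ℕ → ℕ) (e : ℕ → ℕ) : Prop :=
  e 0 = m ∧ e g = 1 ∧ ∀ k < g,
    supp (β (k + 1)) ∧ ¬ (e k ∣ β (k + 1)) ∧
    (∀ i : ℕ, supp i → ¬ (e k ∣ i) → β (k + 1) ≤ i) ∧
    e (k + 1) = Nat.gcd (e k) (β (k + 1))

/-- `RamIrred q N F` : the element `f ∈ K((x^{1/q}))`, expanded as the Laurent series `F`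
in the variable `u = x^{1/N}` (where `q ∣ N`), has irreducible associated connection
`E_{f,q}`, i.e. its image in `R_q` cannot be represented by an element of `K((x^{1/d}))`
for any proper divisor `d` of `q`. -/
def RamIrred {K : Type*} [Field K] (q N : ℕ) (F : LaurentSeries K) : Prop :=
  ∀ d : ℕ, d ∣ q → d < q → ¬ (∀ n : ℤ, n < 0 → F.coeff n ≠ 0 → ((N / d : ℕ) : ℤ) ∣ n)


section AuxOrderDiff

lemma HahnSeries.order_eq_of_min {K : Type*} [Field K] {x : HahnSeries ℤ K} {c : ℤ}
    (hc : x.coeff c ≠ 0) (hmin : ∀ n, x.coeff n ≠ 0 → c ≤ n) : x.order = c := by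
  have hx : x ≠ 0 := fun h => hc (by simp [h])
  exact le_antisymm (HahnSeries.order_le_of_coeff_ne_zero hc)
    (hmin _ (HahnSeries.coeff_order_eq_zero.not.mpr hx))

lemma dvd_transfer (i q : ℕ) (hq : 0 < q) (n : ℤ) :
    (q : ℤ) ∣ (i : ℤ) * n ↔ ((q / Nat.gcd i q : ℕ) : ℤ) ∣ n := by
  set d := Nat.gcd i q with hd
  have hd0 : 0 < d := Nat.gcd_pos_of_pos_right _ hq
  have hq' : (q : ℤ) = (d : ℤ) * ((q / d : ℕ) : ℤ) := by
    exact_mod_cast (Nat.mul_div_cancel' (Nat.gcd_dvd_right i q)).symm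
  have hi' : (i : ℤ) = (d : ℤ) * ((i / d : ℕ) : ℤ) := by
    exact_mod_cast (Nat.mul_div_cancel' (Nat.gcd_dvd_left i q)).symm
  have hcop : IsCoprime ((q / d : ℕ) : ℤ) ((i / d : ℕ) : ℤ) :=
    Nat.isCoprime_iff_coprime.mpr (Nat.coprime_div_gcd_div_gcd hd0).symm
  rw [hq', hi', mul_assoc, mul_dvd_mul_iff_left (by exact_mod_cast hd0.ne' : (d:ℤ) ≠ 0)]
  constructor
  · intro h
    exact hcop.dvd_of_dvd_mul_left h
  · intro h
    exact Dvd.dvd.mul_left h _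

end AuxOrderDiff

/-- Let `f` define an irreducible `E_{f,q}` with dual Puiseux
characteristic `(q, p; β 1, …, β g)` and gcd sequence `e`, and let `f_i(t) = f(ζ^i t)`
where `F` is the expansion of `f` in `t = x^{1/q}`.  Then for `1 ≤ j ≤ g` and
`1 ≤ i ≤ q-1`: `ord_x (f - f_i) = -β j / q` (i.e. `ord_t (F - F_i) = -β j`) if and only
if `q / e (j-1)` divides `i` and `q / e j` does not divide `i`; moreover the number of
indices `i ∈ {1, …, q-1}` with `ord_t (F - F_i) = -β j` equals `e (j-1) - e j`. -/
theorem order_difference_conjugates {K : Type*} [Field K] [CharZero K] [IsAlgClosed K]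
    (q p : ℕ) (hq : 0 < q) (hp : 0 < p)
    (ζ : K) (hζ : IsPrimitiveRoot ζ q)
    (F : LaurentSeries K)
    (hFlow : ∀ n : ℤ, n < -(p : ℤ) → F.coeff n = 0)
    (hFlead : F.coeff (-(p : ℤ)) ≠ 0)
    (hFirr : RamIrred q q F)
    (g : ℕ) (β e : ℕ → ℕ)
    (hchar : DualChar q (fun n => F.coeff n ≠ 0) g β e) :
    ∀ j : ℕ, 1 ≤ j → j ≤ g →
      (∀ i : ℕ, 1 ≤ i → i ≤ q - 1 →
        ((F - LaurentSeries.conjRoot (ζ ^ i) F).order = -(β j : ℤ) ↔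
          (q / e (j - 1) ∣ i ∧ ¬ (q / e j ∣ i)))) ∧
      ((Finset.Icc 1 (q - 1)).filter
          (fun i => (F - LaurentSeries.conjRoot (ζ ^ i) F).order = -(β j : ℤ))).card =
        e (j - 1) - e j := by
  classical
  obtain ⟨he0, heg, hk⟩ := hchar
  have estep : ∀ k, k < g → e (k+1) ∣ e k := fun k hk' => by
    rw [(hk k hk').2.2.2]; exact Nat.gcd_dvd_left _ _
  have echain : ∀ k l, k ≤ l → l ≤ g → e l ∣ e k := by
    intro k l hkl hlg
    induction l with
    | zero => obtain rfl : k = 0 := Nat.le_zero.mp hkl; exact dvd_rfl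
    | succ n ih =>
      rcases Nat.lt_or_ge k (n+1) with h | h
      · exact (estep n (by omega)).trans (ih (by omega) (by omega))
      · obtain rfl : k = n+1 := le_antisymm hkl h; exact dvd_rfl
  have epos : ∀ k, k ≤ g → 0 < e k := by
    intro k
    induction k with
    | zero => intro _; rw [he0]; exact hq
    | succ n ih =>
      intro h
      rw [(hk n (by omega)).2.2.2]
      exact Nat.gcd_pos_of_pos_left _ (ih (by omega))
  have edvdq : ∀ k, k ≤ g → e k ∣ q := fun k hk' => he0 ▸ echain 0 k (Nat.zero_le _) hk'
  have βlt : ∀ a b, 1 ≤ a → a < b → b ≤ g → β b < β a := by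
    intro a b ha hab hbg
    obtain ⟨hsa, hnda, hmina, hgcda⟩ := hk (a-1) (by omega)
    obtain ⟨hsb, hndb, hminb, hgcdb⟩ := hk (b-1) (by omega)
    rw [show a-1+1 = a from by omega] at hsa hnda hmina hgcda
    rw [show b-1+1 = b from by omega] at hsb hndb hminb hgcdb
    have hba : e (b-1) ∣ e (a-1) := echain (a-1) (b-1) (by omega) (by omega)
    have h1 : ¬ ((e (a-1) : ℤ) ∣ -(β b : ℤ)) := fun h =>
      hndb ((Int.natCast_dvd_natCast.mpr hba).trans (Int.dvd_neg.mp h))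
    have h2 : -(β a : ℤ) ≤ -(β b : ℤ) := hmina _ hsb h1
    have h3 : β b ≤ β a := by omega
    rcases h3.lt_or_eq with h | h
    · exact h
    · exfalso
      have h4 : e a ∣ β a := hgcda ▸ Nat.gcd_dvd_right (e (a-1)) (β a)
      have h5 : e (b-1) ∣ β b := (echain a (b-1) (by omega) (by omega)).trans (h ▸ h4)
      exact hndb (Int.natCast_dvd_natCast.mpr h5)
  have coeffdesc : ∀ (i : ℕ) (n : ℤ),
      (F - LaurentSeries.conjRoot (ζ ^ i) F).coeff n
        = F.coeff n * (1 - ζ ^ ((i : ℤ) * n)) := by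
    intro i n
    have h1 : (LaurentSeries.conjRoot (ζ ^ i) F).coeff n = (ζ ^ i) ^ n * F.coeff n := rfl
    rw [HahnSeries.coeff_sub, h1, ← zpow_natCast ζ i, ← zpow_mul]
    ring
  have suppiff : ∀ (i : ℕ) (n : ℤ),
      (F - LaurentSeries.conjRoot (ζ ^ i) F).coeff n ≠ 0 ↔
        (F.coeff n ≠ 0 ∧ ¬ ((q : ℤ) ∣ (i : ℤ) * n)) := by
    intro i n
    rw [coeffdesc, mul_ne_zero_iff, sub_ne_zero, ← hζ.zpow_eq_one_iff_dvd]
    exact and_congr_right fun _ => ne_comm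
  have key : ∀ (j' : ℕ), 1 ≤ j' → j' ≤ g → ∀ m : ℕ, m ∣ e (j'-1) → ¬ m ∣ e j' →
      ∀ i : ℕ, (∀ n : ℤ, ((q:ℤ) ∣ (i:ℤ) * n ↔ (m:ℤ) ∣ n)) →
      (F - LaurentSeries.conjRoot (ζ ^ i) F).order = -(β j' : ℤ) := by
    intro j' h1 h2 m hm1 hm2 i hiff
    obtain ⟨hsupp, hnd, hmin, hgcd⟩ := hk (j'-1) (by omega)
    rw [show j'-1+1 = j' from by omega] at hsupp hnd hmin hgcd
    have hmβ : ¬ ((m:ℤ) ∣ -(β j' : ℤ)) := by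
      rw [Int.dvd_neg]
      intro h
      have h' : m ∣ β j' := Int.natCast_dvd_natCast.mp h
      exact hm2 (hgcd ▸ Nat.dvd_gcd hm1 h')
    apply HahnSeries.order_eq_of_min
    · rw [suppiff]
      exact ⟨hsupp, fun h => hmβ ((hiff _).mp h)⟩
    · intro n hn
      rw [suppiff] at hn
      refine hmin n hn.1 fun hden => hn.2 ((hiff n).mpr ?_)
      exact (Int.natCast_dvd_natCast.mpr hm1).trans hden
  intro j hj1 hjg
  have main : ∀ i : ℕ, 1 ≤ i → i ≤ q - 1 →
      ((F - LaurentSeries.conjRoot (ζ ^ i) F).order = -(β j : ℤ) ↔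
        (q / e (j-1) ∣ i ∧ ¬ (q / e j ∣ i))) := by
    intro i hi1 hi2
    set d := Nat.gcd i q with hd
    set m := q / d with hm
    have hd0 : 0 < d := Nat.gcd_pos_of_pos_right _ hq
    have hdq : d ∣ q := Nat.gcd_dvd_right i q
    have hdi : d ∣ i := Nat.gcd_dvd_left i q
    have hdlt : d < q := lt_of_le_of_lt (Nat.le_of_dvd (by omega) hdi) (by omega)
    have hmd : m * d = q := Nat.div_mul_cancel hdq
    have hm0 : m ≠ 0 := by rintro h; rw [h] at hmd; omega
    have hmne1 : m ≠ 1 := by rintro h; rw [h, one_mul] at hmd; omega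
    have hmq : m ∣ q := ⟨d, hmd.symm⟩
    have hiff : ∀ n : ℤ, (q:ℤ) ∣ (i:ℤ) * n ↔ (m:ℤ) ∣ n := fun n => dvd_transfer i q hq n
    have hPg : ¬ m ∣ e g := by rw [heg]; intro h; exact hmne1 (Nat.dvd_one.mp h)
    have hex : ∃ k, ¬ m ∣ e k := ⟨g, hPg⟩
    set J := Nat.find hex with hJ
    have hJspec : ¬ m ∣ e J := Nat.find_spec hex
    have hJle : J ≤ g := Nat.find_min' hex hPg
    have hJ0 : J ≠ 0 := by
      intro h
      rw [h, he0] at hJspec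
      exact hJspec hmq
    have hJprev : m ∣ e (J-1) := by
      by_contra h
      exact (Nat.find_min hex (show J - 1 < J by omega)) h
    have horder := key J (by omega) hJle m hJprev hJspec i hiff
    have trans2 : ∀ A : ℕ, 0 < A → A ∣ q → (q / A ∣ i ↔ m ∣ A) := by
      intro A hA0 hAq
      have hAz : q / A * A = q := Nat.div_mul_cancel hAq
      have equiv1 : (q / A ∣ d) ↔ (q ∣ d * A) := by
        rw [← mul_dvd_mul_iff_right (show A ≠ 0 from by omega) (a := q/A) (b := d), hAz]
      have equiv2 : (m ∣ A) ↔ (q ∣ d * A) := by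
        rw [← mul_dvd_mul_iff_right (show d ≠ 0 from by omega) (a := m) (b := A), hmd,
          mul_comm A d]
      constructor
      · intro h
        exact equiv2.mpr (equiv1.mp (Nat.dvd_gcd h (Nat.div_dvd_of_dvd hAq)))
      · intro h
        exact (equiv1.mpr (equiv2.mp h)).trans hdi
    constructor
    · intro h
      have hβ : β J = β j := by
        have h' := horder.symm.trans h
        omega
      have hJj : J = j := by
        by_contra hne
        rcases Nat.lt_or_ge J j with hlt | hge
        · exact absurd hβ (Nat.ne_of_gt (βlt J j (by omega) hlt hjg))
        · exact absurd hβ (Nat.ne_of_lt (βlt j J hj1 (by omega) hJle))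
      refine ⟨(trans2 (e (j-1)) (epos _ (by omega)) (edvdq _ (by omega))).mpr
        (hJj ▸ hJprev), fun hcon => (hJj ▸ hJspec)
        ((trans2 (e j) (epos _ hjg) (edvdq _ hjg)).mp hcon)⟩
    · rintro ⟨h1, h2⟩
      have hm1' : m ∣ e (j-1) := (trans2 _ (epos _ (by omega)) (edvdq _ (by omega))).mp h1
      have hm2' : ¬ m ∣ e j := fun h => h2 ((trans2 _ (epos _ hjg) (edvdq _ hjg)).mpr h)
      exact key j hj1 hjg m hm1' hm2' i hiff
  refine ⟨main, ?_⟩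
  have hfC : (Finset.Icc 1 (q-1)).filter
      (fun i => (F - LaurentSeries.conjRoot (ζ ^ i) F).order = -(β j : ℤ)) =
      (Finset.Icc 1 (q-1)).filter (fun i => q / e (j-1) ∣ i ∧ ¬ q / e j ∣ i) :=
    Finset.filter_congr (fun i hi => by
      rw [Finset.mem_Icc] at hi
      exact main i hi.1 hi.2)
  rw [hfC]
  have hA0 : 0 < e (j-1) := epos _ (by omega)
  have hB0 : 0 < e j := epos _ hjg
  have hAq : e (j-1) ∣ q := edvdq _ (by omega)
  have hBq : e j ∣ q := edvdq _ hjg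
  have hBA : e j ∣ e (j-1) := echain (j-1) j (by omega) hjg
  set A := e (j-1) with hA
  set B := e j with hB
  set a := q / A with ha
  set b := q / B with hb
  have hq_a : a * A = q := Nat.div_mul_cancel hAq
  have hq_b : b * B = q := Nat.div_mul_cancel hBq
  have hab : a ∣ b := by
    obtain ⟨r, hr⟩ := hBA
    obtain ⟨s, hs⟩ := hAq
    have ha' : a = s := by rw [ha, hs, Nat.mul_div_cancel_left s hA0]
    have hb' : b = r * s := by
      rw [hb, hs, hr, mul_assoc, Nat.mul_div_cancel_left _ hB0]
    rw [ha', hb']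
    exact dvd_mul_left s r
  have hsplit : (Finset.Icc 1 (q-1)).filter (fun i => a ∣ i ∧ ¬ b ∣ i) =
      (Finset.Icc 1 (q-1)).filter (fun i => a ∣ i) \
        (Finset.Icc 1 (q-1)).filter (fun i => b ∣ i) := by
    ext x
    simp only [Finset.mem_filter, Finset.mem_sdiff]
    constructor
    · rintro ⟨hx, h1, h2⟩; exact ⟨⟨hx, h1⟩, fun h => h2 h.2⟩
    · rintro ⟨⟨hx, h1⟩, h2⟩; exact ⟨hx, h1, fun h => h2 ⟨hx, h⟩⟩
  rw [hsplit, Finset.card_sdiff_of_subset]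
  · have hIoc : Finset.Icc 1 (q-1) = Finset.Ioc 0 (q-1) := Finset.Icc_add_one_left_eq_Ioc 0 (q-1)
    rw [hIoc, Nat.Ioc_filter_dvd_card_eq_div, Nat.Ioc_filter_dvd_card_eq_div]
    have hdiv : ∀ (c C : ℕ), 0 < c → c * C = q → (q-1)/c = C - 1 := by
      intro c C hc hcC
      have hC : C ≠ 0 := by rintro rfl; rw [mul_zero] at hcC; omega
      have h1 : q - 1 = c * (C-1) + (c-1) := by
        have h2 : c * C = c * (C-1) + c := by
          obtain ⟨C', rfl⟩ : ∃ C', C = C' + 1 := ⟨C-1, by omega⟩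
          rw [Nat.add_sub_cancel, Nat.mul_succ]
        omega
      rw [h1, Nat.mul_add_div hc, Nat.div_eq_of_lt (by omega), Nat.add_zero]
    rw [hdiv a A (Nat.div_pos (Nat.le_of_dvd hq hAq) hA0) hq_a,
      hdiv b B (Nat.div_pos (Nat.le_of_dvd hq hBq) hB0) hq_b]
    omega
  · intro x hx
    rw [Finset.mem_filter] at hx ⊢
    exact ⟨hx.1, hab.trans hx.2⟩
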